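/- Let G be a tree-cograph that is contact B₀-VPG. Then every connected component of G is a tree, or is isomorphic to the complement of the path P₅ on 5 vertices, or is a contact B₀-VPG cograph. -/

import Mathlib

open SimpleGraph

/-- A horizontal grid segment on row `y`, spanning columns `a` to `b`. -/
def IsHorizSeg (S : Set (ℤ × ℤ)) : Prop :=
  ∃ y a b : ℤ, a ≤ b ∧ S = {p : ℤ × ℤ | p.2 = y ∧ a ≤ p.1 ∧ p.1 ≤ b}

/-- A vertical grid segment on column `x`, spanning rows `a` to `b`. -/
def IsVertSeg (S : Set (ℤ × ℤ)) : Prop :=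
  ∃ x a b : ℤ, a ≤ b ∧ S = {p : ℤ × ℤ | p.1 = x ∧ a ≤ p.2 ∧ p.2 ≤ b}

/-- A grid segment is a horizontal or vertical segment. -/
def IsGridSegment (S : Set (ℤ × ℤ)) : Prop := IsHorizSeg S ∨ IsVertSeg S

/-- `p` is an endpoint (extreme point) of the grid segment `S`. -/
def IsEndpointOf (p : ℤ × ℤ) (S : Set (ℤ × ℤ)) : Prop :=
  (∃ y a b : ℤ, a ≤ b ∧ S = {q : ℤ × ℤ | q.2 = y ∧ a ≤ q.1 ∧ q.1 ≤ b} ∧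
      (p = (a, y) ∨ p = (b, y))) ∨
  (∃ x a b : ℤ, a ≤ b ∧ S = {q : ℤ × ℤ | q.1 = x ∧ a ≤ q.2 ∧ q.2 ≤ b} ∧
      (p = (x, a) ∨ p = (x, b)))

/-- A contact B₀-VPG representation of a simple graph `G`. -/
structure ContactB0VPGRep {V : Type*} (G : SimpleGraph V) where
  seg : V → Set (ℤ × ℤ)
  isSeg : ∀ v : V, IsGridSegment (seg v)
  adj_iff : ∀ u v : V, u ≠ v → (G.Adj u v ↔ (seg u ∩ seg v).Nonempty)
  inter_subsingleton : ∀ u v : V, u ≠ v → (seg u ∩ seg v).Subsingleton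
  contact : ∀ u v : V, u ≠ v → ∀ p ∈ seg u ∩ seg v,
    IsEndpointOf p (seg u) ∨ IsEndpointOf p (seg v)

/-- A graph is contact B₀-VPG if it admits a contact B₀-VPG representation. -/
def ContactB0VPG {V : Type*} (G : SimpleGraph V) : Prop :=
  Nonempty (ContactB0VPGRep G)

/-- `G` is `H`-free: no induced subgraph of `G` is isomorphic to `H`. -/
def Free {V : Type*} {W : Type*} (G : SimpleGraph V) (H : SimpleGraph W) : Prop :=
  IsEmpty (H ↪g G)

/-- The complete graph `K₅`. -/
def K5 : SimpleGraph (Fin 5) := ⊤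

/-- The complete bipartite graph `K₃,₃`. -/
def K33 : SimpleGraph (Fin 3 ⊕ Fin 3) := completeBipartiteGraph (Fin 3) (Fin 3)

/-- The graph `K₄ − e`. -/
def K4e : SimpleGraph (Fin 4) := (⊤ : SimpleGraph (Fin 4)).deleteEdges {s(0, 1)}

/-- The graph `H₀`: three copies of `K₄` sharing exactly the common vertex `0`. -/
def H0 : SimpleGraph (Fin 10) :=
  SimpleGraph.fromRel (fun a b => a = 0 ∨ b = 0 ∨ (a.val - 1) / 3 = (b.val - 1) / 3)

/-- A graph is chordal if it has no induced cycle of length at least 4. -/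
def Chordal {V : Type*} (G : SimpleGraph V) : Prop :=
  ∀ n : ℕ, 4 ≤ n → IsEmpty (cycleGraph n ↪g G)

/-- In the representation `R`, `p` is a free endpoint of the segment of `v`. -/
def RepFreeEndpoint {V : Type*} {G : SimpleGraph V} (R : ContactB0VPGRep G)
    (v : V) (p : ℤ × ℤ) : Prop :=
  IsEndpointOf p (R.seg v) ∧ ∀ w : V, w ≠ v → p ∉ R.seg w

/-- `v` is internal: no contact B₀-VPG representation of `G` has a free endpoint of `P_v`. -/
def InternalVertex {V : Type*} (G : SimpleGraph V) (v : V) : Prop :=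
  ∀ R : ContactB0VPGRep G, ¬ ∃ p : ℤ × ℤ, RepFreeEndpoint R v p

/-- The graph `G_T` built from a base tree `T`: each vertex `v` of `T` gets `3 - deg v`
new pendant copies of `K₄` through `v`. -/
def GraphGT {V : Type*} [Fintype V] (T : SimpleGraph V) [DecidableRel T.Adj] :
    SimpleGraph (V ⊕ Σ v : V, Fin (3 - T.degree v) × Fin 3) :=
  SimpleGraph.fromRel (fun a b =>
    match a, b with
    | Sum.inl u, Sum.inl w => T.Adj u w
    | Sum.inl u, Sum.inr x => u = x.1
    | Sum.inr x, Sum.inl w => x.1 = w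
    | Sum.inr x, Sum.inr y => x.1 = y.1 ∧ (x.2.1 : ℕ) = (y.2.1 : ℕ))

/-- A witness that `G` is (isomorphic to) a graph `G_T` for a base tree `T`
with at least two vertices and maximum degree at most `d`. -/
structure BaseTreeWitness {W : Type*} (G : SimpleGraph W) (d : ℕ) where
  V : Type
  [instFin : Fintype V]
  T : SimpleGraph V
  [instDec : DecidableRel T.Adj]
  conn : T.Connected
  acyc : T.IsAcyclic
  two_le : 2 ≤ Fintype.card V
  maxdeg : ∀ v : V, T.degree v ≤ d
  iso : Nonempty (G ≃g GraphGT T)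

/-- Membership in the family `𝒯`. -/
def InFamilyT {W : Type*} (G : SimpleGraph W) : Prop :=
  Nonempty (G ≃g H0) ∨ Nonempty (BaseTreeWitness G 3)

/-- Membership in the family `𝒯'` (base trees of maximum degree at most 2, plus `H₀`). -/
def InFamilyT' {W : Type*} (G : SimpleGraph W) : Prop :=
  Nonempty (G ≃g H0) ∨ Nonempty (BaseTreeWitness G 2)

/-- The disjoint union of two simple graphs. -/
def DisjUnion {V₁ V₂ : Type*} (G₁ : SimpleGraph V₁) (G₂ : SimpleGraph V₂) :
    SimpleGraph (V₁ ⊕ V₂) :=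
  SimpleGraph.fromRel (fun a b =>
    match a, b with
    | Sum.inl u, Sum.inl w => G₁.Adj u w
    | Sum.inr u, Sum.inr w => G₂.Adj u w
    | _, _ => False)

/-- The class of tree-cographs: the smallest class of (finite) simple graphs containing all
trees, closed under disjoint unions, complements, and isomorphism. -/
inductive TreeCograph : ∀ {V : Type u}, SimpleGraph V → Prop
  | tree {V : Type u} [Fintype V] (G : SimpleGraph V) :
      G.Connected → G.IsAcyclic → TreeCograph G
  | union {V₁ V₂ : Type u} {G₁ : SimpleGraph V₁} {G₂ : SimpleGraph V₂} :
      TreeCograph G₁ → TreeCograph G₂ → TreeCograph (DisjUnion G₁ G₂)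
  | compl {V : Type u} {G : SimpleGraph V} : TreeCograph G → TreeCograph Gᶜ
  | iso {V W : Type u} {G : SimpleGraph V} {H : SimpleGraph W} :
      TreeCograph G → Nonempty (G ≃g H) → TreeCograph H

/-- `G` is an interval graph. -/
def IsIntervalGraph {V : Type*} (G : SimpleGraph V) : Prop :=
  ∃ f : V → ℝ × ℝ, (∀ v : V, (f v).1 ≤ (f v).2) ∧
    ∀ u v : V, u ≠ v →
      (G.Adj u v ↔ (Set.Icc (f u).1 (f u).2 ∩ Set.Icc (f v).1 (f v).2).Nonempty)

/-- The set `A` induces a `P₄` in `G`. -/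
def InducesP4 {V : Type*} (G : SimpleGraph V) (A : Set V) : Prop :=
  Nonempty (G.induce A ≃g pathGraph 4)

/-- `v` is a partner of the `P₄`-inducing set `A`. -/
def IsPartner {V : Type*} (G : SimpleGraph V) (A : Set V) (v : V) : Prop :=
  v ∉ A ∧ ∃ B₁ B₂ : Set V, B₁ ≠ B₂ ∧ B₁ ⊆ A ∪ {v} ∧ B₂ ⊆ A ∪ {v} ∧
    InducesP4 G B₁ ∧ InducesP4 G B₂

/-- `G` is `P₄`-tidy: every vertex set inducing a `P₄` has at most one partner. -/
def P4Tidy {V : Type*} (G : SimpleGraph V) : Prop :=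
  ∀ A : Set V, InducesP4 G A → ∀ v w : V, IsPartner G A v → IsPartner G A w → v = w

/-- The graph `G_{P₂}`: an edge `01` with two pendant `K₄`'s at `0`
(`{0,2,3,4}`, `{0,5,6,7}`) and two pendant `K₄`'s at `1` (`{1,8,9,10}`, `{1,11,12,13}`). -/
def GP2 : SimpleGraph (Fin 14) :=
  SimpleGraph.fromRel (fun a b =>
    (a = 0 ∧ b = 1) ∨
    (a = 0 ∧ 2 ≤ b.val ∧ b.val ≤ 7) ∨
    (a = 1 ∧ 8 ≤ b.val) ∨
    (2 ≤ a.val ∧ 2 ≤ b.val ∧ (a.val - 2) / 3 = (b.val - 2) / 3))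

/-- The graph `K₃,₃*`, obtained from `K₃,₃` (parts `{0,1,2}` and `{3,4,5}`) by
subdividing the edge `25` with the new vertex `6`. -/
def K33star : SimpleGraph (Fin 7) :=
  SimpleGraph.fromRel (fun a b =>
    (a.val ≤ 2 ∧ 3 ≤ b.val ∧ b.val ≤ 5 ∧ ¬(a = 2 ∧ b = 5)) ∨
    (a = 6 ∧ (b = 2 ∨ b = 5)))

/-- diamond pattern -/
def HasDiamond {V : Type*} (G : SimpleGraph V) : Prop :=
  ∃ u w x y : V, G.Adj u w ∧ G.Adj x u ∧ G.Adj x w ∧ G.Adj y u ∧ G.Adj y w ∧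
    x ≠ y ∧ ¬ G.Adj x y

section Geometry
variable {V : Type*} {G : SimpleGraph V}

/-- In a contact B₀-VPG representation, the segment of a common neighbor of two
adjacent vertices passes through their contact point. -/
lemma seg_mem_of_common_neighbor (R : ContactB0VPGRep G) {u w x : V}
    (huw : G.Adj u w) (hxu : G.Adj x u) (hxw : G.Adj x w)
    {p : ℤ × ℤ} (hpu : p ∈ R.seg u) (hpw : p ∈ R.seg w) : p ∈ R.seg x := by
  obtain ⟨q₁, hq₁x, hq₁u⟩ := ((R.adj_iff x u hxu.ne).1 hxu)
  obtain ⟨q₂, hq₂x, hq₂w⟩ := ((R.adj_iff x w hxw.ne).1 hxw)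
  by_cases hq : q₁ = q₂
  · subst hq
    have : q₁ = p := R.inter_subsingleton u w huw.ne ⟨hq₁u, hq₂w⟩ ⟨hpu, hpw⟩
    exact this ▸ hq₁x
  by_contra hpx
  have hpq₁ : p ≠ q₁ := fun h => hpx (h ▸ hq₁x)
  have hpq₂ : p ≠ q₂ := fun h => hpx (h ▸ hq₂x)
  -- case on the segment shapes
  rcases R.isSeg x with ⟨y, a, b, hab, hx⟩ | ⟨z, a, b, hab, hx⟩
  · -- x horizontal on row y
    rw [hx] at hq₁x hq₂x hpx
    obtain ⟨hy1, ha1, hb1⟩ := hq₁x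
    obtain ⟨hy2, ha2, hb2⟩ := hq₂x
    have hq12 : q₁.1 ≠ q₂.1 := fun h => hq (Prod.ext h (hy1.trans hy2.symm))
    rcases R.isSeg u with ⟨yu, c, d, hcd, hu⟩ | ⟨zu, c, d, hcd, hu⟩
    · -- u horizontal
      rw [hu] at hq₁u hpu
      obtain ⟨hyu1, hc1, hd1⟩ := hq₁u
      obtain ⟨hyup, hcp, hdp⟩ := hpu
      have hyuy : yu = y := by rw [← hyu1, hy1]
      rcases R.isSeg w with ⟨yw, e, f, hef, hw⟩ | ⟨zw, e, f, hef, hw⟩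
      · -- w horizontal: interval argument
        rw [hw] at hq₂w hpw
        obtain ⟨hyw2, he2, hf2⟩ := hq₂w
        obtain ⟨hywp, hep, hfp⟩ := hpw
        have hywy : yw = y := by rw [← hyw2, hy2]
        have hpy : p.2 = y := by rw [hyup, hyuy]
        have hout : p.1 < a ∨ b < p.1 := by
          by_contra hcon
          push_neg at hcon
          exact hpx ⟨hpy, hcon.1, hcon.2⟩
        rcases hout with hlt | hgt
        · have hmem : ((a, y) : ℤ × ℤ) ∈ R.seg u ∩ R.seg w := by
            constructor
            · rw [hu]; exact ⟨hyuy ▸ rfl, by omega, by omega⟩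
            · rw [hw]; exact ⟨hywy ▸ rfl, by omega, by omega⟩
          have := R.inter_subsingleton u w huw.ne hmem ⟨by rw [hu]; exact ⟨hyup, hcp, hdp⟩, by rw [hw]; exact ⟨hywp, hep, hfp⟩⟩
          have : (a : ℤ) = p.1 := congrArg Prod.fst this
          omega
        · have hmem : ((b, y) : ℤ × ℤ) ∈ R.seg u ∩ R.seg w := by
            constructor
            · rw [hu]; exact ⟨hyuy ▸ rfl, by omega, by omega⟩
            · rw [hw]; exact ⟨hywy ▸ rfl, by omega, by omega⟩
          have := R.inter_subsingleton u w huw.ne hmem ⟨by rw [hu]; exact ⟨hyup, hcp, hdp⟩, by rw [hw]; exact ⟨hywp, hep, hfp⟩⟩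
          have : (b : ℤ) = p.1 := congrArg Prod.fst this
          omega
      · -- w vertical: p = (zw, y) ∈ x, contradiction
        rw [hw] at hq₂w hpw
        obtain ⟨hz2, -, -⟩ := hq₂w
        obtain ⟨hzp, -, -⟩ := hpw
        exact hpx ⟨by rw [hyup, hyuy], by omega, by omega⟩
    · -- u vertical
      rw [hu] at hq₁u hpu
      obtain ⟨hz1, -, -⟩ := hq₁u
      obtain ⟨hzp, -, -⟩ := hpu
      rcases R.isSeg w with ⟨yw, e, f, hef, hw⟩ | ⟨zw, e, f, hef, hw⟩
      · -- w horizontal: p = (zu, y) ∈ x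
        rw [hw] at hq₂w hpw
        obtain ⟨hyw2, -, -⟩ := hq₂w
        obtain ⟨hywp, -, -⟩ := hpw
        have hpy : p.2 = y := by rw [hywp, ← hyw2, hy2]
        exact hpx ⟨hpy, by omega, by omega⟩
      · -- w vertical: q₁.1 = q₂.1, contradiction
        rw [hw] at hq₂w hpw
        obtain ⟨hz2, -, -⟩ := hq₂w
        obtain ⟨hzwp, -, -⟩ := hpw
        exact hq12 (by omega)
  · -- x vertical on column z (symmetric)
    rw [hx] at hq₁x hq₂x hpx
    obtain ⟨hy1, ha1, hb1⟩ := hq₁x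
    obtain ⟨hy2, ha2, hb2⟩ := hq₂x
    have hq12 : q₁.2 ≠ q₂.2 := fun h => hq (Prod.ext (hy1.trans hy2.symm) h)
    rcases R.isSeg u with ⟨yu, c, d, hcd, hu⟩ | ⟨zu, c, d, hcd, hu⟩
    · -- u horizontal
      rw [hu] at hq₁u hpu
      obtain ⟨hz1, -, -⟩ := hq₁u
      obtain ⟨hzp, -, -⟩ := hpu
      rcases R.isSeg w with ⟨yw, e, f, hef, hw⟩ | ⟨zw, e, f, hef, hw⟩
      · -- w horizontal : q₁.2 = q₂.2 contradiction
        rw [hw] at hq₂w hpw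
        obtain ⟨hz2, -, -⟩ := hq₂w
        obtain ⟨hzwp, -, -⟩ := hpw
        exact hq12 (by omega)
      · -- w vertical
        rw [hw] at hq₂w hpw
        obtain ⟨hyw2, -, -⟩ := hq₂w
        obtain ⟨hywp, -, -⟩ := hpw
        have hpz : p.1 = z := by rw [hywp, ← hyw2, hy2]
        exact hpx ⟨hpz, by omega, by omega⟩
    · -- u vertical
      rw [hu] at hq₁u hpu
      obtain ⟨hzu1, hc1, hd1⟩ := hq₁u
      obtain ⟨hzup, hcp, hdp⟩ := hpu
      have hzuz : zu = z := by rw [← hzu1, hy1]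
      rcases R.isSeg w with ⟨yw, e, f, hef, hw⟩ | ⟨zw, e, f, hef, hw⟩
      · -- w horizontal : p = (z, yw) ∈ x contradiction
        rw [hw] at hq₂w hpw
        obtain ⟨hz2, -, -⟩ := hq₂w
        obtain ⟨hzwp, -, -⟩ := hpw
        exact hpx ⟨by rw [hzup, hzuz], by omega, by omega⟩
      · -- w vertical : interval argument
        rw [hw] at hq₂w hpw
        obtain ⟨hzw2, he2, hf2⟩ := hq₂w
        obtain ⟨hzwp, hep, hfp⟩ := hpw
        have hzwz : zw = z := by rw [← hzw2, hy2]
        have hpz : p.1 = z := by rw [hzup, hzuz]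
        have hout : p.2 < a ∨ b < p.2 := by
          by_contra hcon
          push_neg at hcon
          exact hpx ⟨hpz, hcon.1, hcon.2⟩
        rcases hout with hlt | hgt
        · have hmem : ((z, a) : ℤ × ℤ) ∈ R.seg u ∩ R.seg w := by
            constructor
            · rw [hu]; exact ⟨hzuz ▸ rfl, by omega, by omega⟩
            · rw [hw]; exact ⟨hzwz ▸ rfl, by omega, by omega⟩
          have := R.inter_subsingleton u w huw.ne hmem ⟨by rw [hu]; exact ⟨hzup, hcp, hdp⟩, by rw [hw]; exact ⟨hzwp, hep, hfp⟩⟩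
          have : (a : ℤ) = p.2 := congrArg Prod.snd this
          omega
        · have hmem : ((z, b) : ℤ × ℤ) ∈ R.seg u ∩ R.seg w := by
            constructor
            · rw [hu]; exact ⟨hzuz ▸ rfl, by omega, by omega⟩
            · rw [hw]; exact ⟨hzwz ▸ rfl, by omega, by omega⟩
          have := R.inter_subsingleton u w huw.ne hmem ⟨by rw [hu]; exact ⟨hzup, hcp, hdp⟩, by rw [hw]; exact ⟨hzwp, hep, hfp⟩⟩
          have : (b : ℤ) = p.2 := congrArg Prod.snd this
          omega

lemma not_hasDiamond_of_contact (hc : ContactB0VPG G) : ¬ HasDiamond G := by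
  rintro ⟨u, w, x, y, huw, hxu, hxw, hyu, hyw, hxy, hnadj⟩
  obtain ⟨R⟩ := hc
  obtain ⟨p, hpu, hpw⟩ := (R.adj_iff u w huw.ne).1 huw
  have hpx := seg_mem_of_common_neighbor R huw hxu hxw hpu hpw
  have hpy := seg_mem_of_common_neighbor R huw hyu hyw hpu hpw
  exact hnadj ((R.adj_iff x y hxy).2 ⟨p, hpx, hpy⟩)

end Geometry

section Infra

open SimpleGraph

variable {V W : Type*} {G : SimpleGraph V} {H : SimpleGraph W}

/-- The disjunction describing components of tree-cographs. -/
abbrev GoodGraph {W : Type*} (H : SimpleGraph W) : Prop :=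
  (H.Connected ∧ H.IsAcyclic) ∨ Nonempty (H ≃g (pathGraph 5)ᶜ) ∨
  _root_.Free H (pathGraph 4) ∨ HasDiamond H

/-- Complement of an isomorphism. -/
def isoCompl (φ : G ≃g H) : Gᶜ ≃g Hᶜ where
  toEquiv := φ.toEquiv
  map_rel_iff' := by
    intro u v
    simp [compl_adj, φ.map_rel_iff]

lemma connected_of_iso (φ : G ≃g H) (h : G.Connected) : H.Connected := by
  rw [connected_iff] at h ⊢
  obtain ⟨hp, ⟨v⟩⟩ := h
  refine ⟨fun a b => ?_, ⟨φ v⟩⟩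
  have := (hp (φ.symm a) (φ.symm b)).map φ.toHom
  simpa using this

lemma isAcyclic_of_iso (φ : G ≃g H) (h : G.IsAcyclic) : H.IsAcyclic := by
  intro v c hc
  exact h (c.map φ.symm.toHom)
    ((SimpleGraph.Walk.map_isCycle_iff_of_injective (φ.symm.injective)).2 hc)

lemma free_of_iso {X : Type*} {K : SimpleGraph X} (φ : G ≃g H) (h : _root_.Free G K) : _root_.Free H K :=
  ⟨fun e => h.false (φ.symm.toEmbedding.comp e)⟩

lemma hasDiamond_of_iso (φ : G ≃g H) (h : HasDiamond G) : HasDiamond H := by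
  obtain ⟨u, w, x, y, h1, h2, h3, h4, h5, h6, h7⟩ := h
  refine ⟨φ u, φ w, φ x, φ y, ?_, ?_, ?_, ?_, ?_, ?_, ?_⟩ <;>
    simp [φ.map_adj_iff, h1, h2, h3, h4, h5, h6, h7]

lemma goodGraph_of_iso {W' X : Type*} {A : SimpleGraph W'} {B : SimpleGraph X}
    (φ : A ≃g B) (h : GoodGraph A) : GoodGraph B := by
  rcases h with ⟨h1, h2⟩ | ψ | h | h
  · exact Or.inl ⟨connected_of_iso φ h1, isAcyclic_of_iso φ h2⟩
  · exact Or.inr (Or.inl (ψ.elim fun i => ⟨φ.symm.trans i⟩))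
  · exact Or.inr (Or.inr (Or.inl (free_of_iso φ h)))
  · exact Or.inr (Or.inr (Or.inr (hasDiamond_of_iso φ h)))

/-- induced subgraph on a component's support, transported along an isomorphism. -/
def induceSuppIsoOfIso (φ : G ≃g H) (c : G.ConnectedComponent) :
    G.induce c.supp ≃g H.induce (φ.connectedComponentEquiv c).supp where
  toEquiv := ConnectedComponent.isoEquivSupp φ c
  map_rel_iff' := by
    intro a b
    simp [ConnectedComponent.isoEquivSupp, comap_adj, φ.map_adj_iff]

lemma forall_good_components_of_iso (φ : G ≃g H)
    (h : ∀ c : G.ConnectedComponent, GoodGraph (G.induce c.supp)) :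
    ∀ c : H.ConnectedComponent, GoodGraph (H.induce c.supp) := by
  intro c
  have h2 := goodGraph_of_iso (induceSuppIsoOfIso φ (φ.connectedComponentEquiv.symm c)) (h _)
  rwa [Equiv.apply_symm_apply] at h2

lemma supp_eq_univ_of_preconnected (h : G.Preconnected) (c : G.ConnectedComponent) :
    c.supp = Set.univ := by
  refine c.ind fun v => ?_
  ext u
  simp [ConnectedComponent.mem_supp_iff, ConnectedComponent.eq, h u v]

lemma hasDiamond_of_induce {s : Set V} (h : HasDiamond (G.induce s)) : HasDiamond G := by
  obtain ⟨u, w, x, y, h1, h2, h3, h4, h5, h6, h7⟩ := h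
  refine ⟨u.val, w.val, x.val, y.val, h1, h2, h3, h4, h5,
    fun hv => h6 (Subtype.ext hv), fun hadj => h7 hadj⟩

lemma contactB0VPG_induce (hc : ContactB0VPG G) (s : Set V) : ContactB0VPG (G.induce s) := by
  obtain ⟨R⟩ := hc
  refine ⟨⟨fun v => R.seg v.val, fun v => R.isSeg v.val, ?_, ?_, ?_⟩⟩
  · intro u v huv
    have h : (u : V) ≠ v := fun h => huv (Subtype.ext h)
    simpa using R.adj_iff u.val v.val h
  · intro u v huv
    exact R.inter_subsingleton _ _ (fun h => huv (Subtype.ext h))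
  · intro u v huv p hp
    exact R.contact _ _ (fun h => huv (Subtype.ext h)) p hp

end Infra

section Trees

open SimpleGraph

variable {V : Type*} {G : SimpleGraph V}

lemma path_length_unique (hG : G.IsAcyclic) {x y : V} (p q : G.Walk x y)
    (hp : p.IsPath) (hq : q.IsPath) : p.length = q.length := by
  have := hG.path_unique ⟨p, hp⟩ ⟨q, hq⟩
  exact congrArg SimpleGraph.Walk.length (congrArg Subtype.val this)

lemma no_tri (hG : G.IsAcyclic) {x y z : V} (h1 : G.Adj x y) (h2 : G.Adj y z)
    (h3 : G.Adj x z) : False := by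
  have hxy := h1.ne
  have hyz := h2.ne
  have hxz := h3.ne
  have := path_length_unique hG (.cons h1 (.cons h2 .nil)) (.cons h3 .nil)
    (by simp [SimpleGraph.Walk.isPath_def, hxy, hyz, hxz])
    (by simp [SimpleGraph.Walk.isPath_def, hxz])
  simp at this

lemma no_quad (hG : G.IsAcyclic) {x y z t : V} (h1 : G.Adj x y) (h2 : G.Adj y z)
    (h3 : G.Adj z t) (h4 : G.Adj x t) (hxz : x ≠ z) (hyt : y ≠ t) : False := by
  have := path_length_unique hG (.cons h1 (.cons h2 (.cons h3 .nil))) (.cons h4 .nil)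
    (by simp [SimpleGraph.Walk.isPath_def, h1.ne, h2.ne, h3.ne, h4.ne, hxz, hyt])
    (by simp [SimpleGraph.Walk.isPath_def, h4.ne])
  simp at this

lemma no_pent (hG : G.IsAcyclic) {x y z t s : V} (h1 : G.Adj x y) (h2 : G.Adj y z)
    (h3 : G.Adj z t) (h4 : G.Adj t s) (h5 : G.Adj x s)
    (hxz : x ≠ z) (hxt : x ≠ t) (hyt : y ≠ t) (hys : y ≠ s) (hzs : z ≠ s) : False := by
  have := path_length_unique hG (.cons h1 (.cons h2 (.cons h3 (.cons h4 .nil)))) (.cons h5 .nil)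
    (by simp [SimpleGraph.Walk.isPath_def, h1.ne, h2.ne, h3.ne, h4.ne, h5.ne, hxz, hxt, hyt,
      hys, hzs])
    (by simp [SimpleGraph.Walk.isPath_def, h5.ne])
  simp at this

lemma no_hex (hG : G.IsAcyclic) {x y z t s r : V} (h1 : G.Adj x y) (h2 : G.Adj y z)
    (h3 : G.Adj z t) (h4 : G.Adj t s) (h5 : G.Adj s r) (h6 : G.Adj x r)
    (hxz : x ≠ z) (hxt : x ≠ t) (hxs : x ≠ s) (hyt : y ≠ t) (hys : y ≠ s) (hyr : y ≠ r)
    (hzs : z ≠ s) (hzr : z ≠ r) (htr : t ≠ r) : False := by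
  have := path_length_unique hG
    (.cons h1 (.cons h2 (.cons h3 (.cons h4 (.cons h5 .nil))))) (.cons h6 .nil)
    (by simp [SimpleGraph.Walk.isPath_def, h1.ne, h2.ne, h3.ne, h4.ne, h5.ne, h6.ne,
      hxz, hxt, hxs, hyt, hys, hyr, hzs, hzr, htr])
    (by simp [SimpleGraph.Walk.isPath_def, h6.ne])
  simp at this

/-- a `K₂ ∪ 2K₁` pattern in `G` gives a diamond in the complement. -/
lemma hasDiamond_compl_of_pattern {x y u w : V} (hxy : G.Adj x y)
    (huw : ¬G.Adj u w) (hux : ¬G.Adj u x) (huy : ¬G.Adj u y)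
    (hwx : ¬G.Adj w x) (hwy : ¬G.Adj w y)
    (nuw : u ≠ w) (nux : u ≠ x) (nuy : u ≠ y) (nwx : w ≠ x) (nwy : w ≠ y) :
    HasDiamond Gᶜ := by
  refine ⟨u, w, x, y, ?_, ?_, ?_, ?_, ?_, hxy.ne, ?_⟩
  · exact (compl_adj G u w).mpr ⟨nuw, huw⟩
  · exact (compl_adj G x u).mpr ⟨nux.symm, fun h => hux h.symm⟩
  · exact (compl_adj G x w).mpr ⟨nwx.symm, fun h => hwx h.symm⟩
  · exact (compl_adj G y u).mpr ⟨nuy.symm, fun h => huy h.symm⟩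
  · exact (compl_adj G y w).mpr ⟨nwy.symm, fun h => hwy h.symm⟩
  · exact fun h => ((compl_adj G x y).mp h).2 hxy

/-- The complement of an acyclic graph with an induced `P₄` is preconnected. -/
lemma compl_preconnected_of_path (hac : G.IsAcyclic) {a b c d : V}
    (hab : G.Adj a b) (hbc : G.Adj b c) (hcd : G.Adj c d)
    (hac2 : ¬G.Adj a c) (had2 : ¬G.Adj a d) (hbd2 : ¬G.Adj b d)
    (hac3 : a ≠ c) (had3 : a ≠ d) (hbd3 : b ≠ d) : Gᶜ.Preconnected := by
  have key : ∀ z, G.Adj z a → G.Adj z d → False := by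
    intro z hza hzd
    have hzb : z ≠ b := by rintro rfl; exact hbd2 hzd
    have hzc : z ≠ c := by rintro rfl; exact hac2 hza.symm
    exact no_pent hac hza hab hbc hcd hzd hzb hzc hac3 had3 hbd3
  have reach : ∀ z, Gᶜ.Reachable z a := by
    intro z
    by_cases hza : z = a
    · subst hza; exact Reachable.refl z
    · by_cases hGza : G.Adj z a
      · have hzd : z ≠ d := by rintro rfl; exact had2 hGza.symm
        have h1 : Gᶜ.Adj z d := (compl_adj G z d).mpr ⟨hzd, fun h => key z hGza h⟩
        have h2 : Gᶜ.Adj d a := (compl_adj G d a).mpr ⟨fun h => had3 h.symm, fun h => had2 h.symm⟩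
        exact (h1.reachable).trans h2.reachable
      · exact ((compl_adj G z a).mpr ⟨hza, hGza⟩).reachable
  intro u v
  exact (reach u).trans (reach v).symm

end Trees

section Analysis

open SimpleGraph

variable {V : Type*} {G : SimpleGraph V}

/-- If `G` is exactly a path on five vertices, it is isomorphic to `pathGraph 5`. -/
lemma path5_iso (G : SimpleGraph V) {p0 p1 p2 p3 p4 : V}
    (h01 : G.Adj p0 p1) (h12 : G.Adj p1 p2) (h23 : G.Adj p2 p3) (h34 : G.Adj p3 p4)
    (h02 : ¬G.Adj p0 p2) (h03 : ¬G.Adj p0 p3) (h04 : ¬G.Adj p0 p4)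
    (h13 : ¬G.Adj p1 p3) (h14 : ¬G.Adj p1 p4) (h24 : ¬G.Adj p2 p4)
    (n02 : p0 ≠ p2) (n03 : p0 ≠ p3) (n04 : p0 ≠ p4) (n13 : p1 ≠ p3) (n14 : p1 ≠ p4)
    (n24 : p2 ≠ p4)
    (hall : ∀ u, u = p0 ∨ u = p1 ∨ u = p2 ∨ u = p3 ∨ u = p4) :
    Nonempty (G ≃g pathGraph 5) := by
  classical
  have n01 := h01.ne
  have n12 := h12.ne
  have n23 := h23.ne
  have n34 := h34.ne
  set f : Fin 5 → V := ![p0, p1, p2, p3, p4] with hf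
  set g : V → Fin 5 := fun u =>
    if u = p0 then 0 else if u = p1 then 1 else if u = p2 then 2 else if u = p3 then 3 else 4
    with hg
  refine ⟨⟨⟨g, f, ?_, ?_⟩, ?_⟩⟩
  · intro u
    rcases hall u with rfl | rfl | rfl | rfl | rfl <;>
      simp [hg, hf, n01.symm, n02.symm, n03.symm, n04.symm, n12.symm, n13.symm, n14.symm,
        n23.symm, n24.symm, n34.symm]
  · intro i
    fin_cases i <;>
      simp [hg, hf, n01, n02, n03, n04, n12, n13, n14, n23, n24, n34,
        n01.symm, n02.symm, n03.symm, n04.symm, n12.symm, n13.symm, n14.symm,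
        n23.symm, n24.symm, n34.symm]
  · intro u v
    have irr : ∀ w : V, ¬G.Adj w w := fun w => G.irrefl
    have h02s : ¬G.Adj p2 p0 := fun h => h02 h.symm
    have h03s : ¬G.Adj p3 p0 := fun h => h03 h.symm
    have h04s : ¬G.Adj p4 p0 := fun h => h04 h.symm
    have h13s : ¬G.Adj p3 p1 := fun h => h13 h.symm
    have h14s : ¬G.Adj p4 p1 := fun h => h14 h.symm
    have h24s : ¬G.Adj p4 p2 := fun h => h24 h.symm
    rcases hall u with rfl | rfl | rfl | rfl | rfl <;> rcases hall v with rfl | rfl | rfl | rfl | rfl <;>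
      simp [hg, pathGraph_adj, n01, n02, n03, n04, n12, n13, n14, n23, n24, n34,
        n01.symm, n02.symm, n03.symm, n04.symm, n12.symm, n13.symm, n14.symm,
        n23.symm, n24.symm, n34.symm,
        h01, h12, h23, h34, h01.symm, h12.symm, h23.symm, h34.symm,
        h02, h03, h04, h13, h14, h24,
        h02s, h03s, h04s, h13s, h14s, h24s,
        irr, show ((0:Fin 5):ℕ) = 0 from rfl, show ((1:Fin 5):ℕ) = 1 from rfl,
        show ((2:Fin 5):ℕ) = 2 from rfl, show ((3:Fin 5):ℕ) = 3 from rfl,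
        show ((4:Fin 5):ℕ) = 4 from rfl]

/-- If `G` is exactly a path `a-b-c-d` on four vertices, then `Gᶜ ≃g G`
(both are paths on four vertices). -/
lemma compl_path4_iso (G : SimpleGraph V) {a b c d : V}
    (hab : G.Adj a b) (hbc : G.Adj b c) (hcd : G.Adj c d)
    (hac2 : ¬G.Adj a c) (had2 : ¬G.Adj a d) (hbd2 : ¬G.Adj b d)
    (nac : a ≠ c) (nad : a ≠ d) (nbd : b ≠ d)
    (hall : ∀ u, u = a ∨ u = b ∨ u = c ∨ u = d) :
    Nonempty (Gᶜ ≃g G) := by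
  classical
  have nab := hab.ne
  have nbc := hbc.ne
  have ncd := hcd.ne
  have hac2s : ¬G.Adj c a := fun h => hac2 h.symm
  have had2s : ¬G.Adj d a := fun h => had2 h.symm
  have hbd2s : ¬G.Adj d b := fun h => hbd2 h.symm
  have irr : ∀ w : V, ¬G.Adj w w := fun w => G.irrefl
  -- map a↦b, b↦d, d↦c, c↦a ; inverse b↦a, d↦b, c↦d, a↦c
  set f : V → V := fun v => if v = a then b else if v = b then d else if v = d then c else a
    with hfd
  set g : V → V := fun v => if v = b then a else if v = d then b else if v = c then d else c
    with hgd
  refine ⟨⟨⟨f, g, ?_, ?_⟩, ?_⟩⟩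
  · intro u
    rcases hall u with rfl | rfl | rfl | rfl <;>
      simp [hfd, hgd, nab, nbc, ncd, nac, nad, nbd,
        nab.symm, nbc.symm, ncd.symm, nac.symm, nad.symm, nbd.symm]
  · intro u
    rcases hall u with rfl | rfl | rfl | rfl <;>
      simp [hfd, hgd, nab, nbc, ncd, nac, nad, nbd,
        nab.symm, nbc.symm, ncd.symm, nac.symm, nad.symm, nbd.symm]
  · intro u v
    rcases hall u with rfl | rfl | rfl | rfl <;> rcases hall v with rfl | rfl | rfl | rfl <;>
      simp [hfd, compl_adj, nab, nbc, ncd, nac, nad, nbd,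
        nab.symm, nbc.symm, ncd.symm, nac.symm, nad.symm, nbd.symm,
        hab, hbc, hcd, hab.symm, hbc.symm, hcd.symm,
        hac2, had2, hbd2, hac2s, had2s, hbd2s, irr]

/-- Main analysis of acyclic graphs containing an induced `P₄`. -/
lemma tree_analysis (G : SimpleGraph V) (hac : G.IsAcyclic)
    {a b c d : V}
    (hab : G.Adj a b) (hbc : G.Adj b c) (hcd : G.Adj c d)
    (hac2 : ¬G.Adj a c) (had2 : ¬G.Adj a d) (hbd2 : ¬G.Adj b d)
    (nac : a ≠ c) (nad : a ≠ d) (nbd : b ≠ d) :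
    HasDiamond Gᶜ ∨ Nonempty (Gᶜ ≃g G) ∨ Nonempty (G ≃g pathGraph 5) := by
  classical
  have nab := hab.ne
  have nbc := hbc.ne
  have ncd := hcd.ne
  have had2s : ¬G.Adj d a := fun h => had2 h.symm
  have hbd2s : ¬G.Adj d b := fun h => hbd2 h.symm
  by_cases h4 : ∀ u : V, u = a ∨ u = b ∨ u = c ∨ u = d
  · exact Or.inr (Or.inl (compl_path4_iso G hab hbc hcd hac2 had2 hbd2 nac nad nbd h4))
  push_neg at h4
  obtain ⟨v, hva, hvb, hvc, hvd⟩ := h4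
  -- classification of outside vertices
  have hclass : ∀ z, z ≠ a → z ≠ b → z ≠ c → z ≠ d →
      HasDiamond Gᶜ ∨ (G.Adj z a ∧ ¬G.Adj z b ∧ ¬G.Adj z c ∧ ¬G.Adj z d)
        ∨ (G.Adj z d ∧ ¬G.Adj z a ∧ ¬G.Adj z b ∧ ¬G.Adj z c) := by
    intro z hza hzb hzc hzd
    by_cases h1 : G.Adj z a
    · by_cases h2 : G.Adj z b
      · exact absurd (no_tri hac h1 hab h2) not_false
      by_cases h3 : G.Adj z c
      · exact absurd (no_quad hac h1 hab hbc h3 hzb nac) not_false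
      by_cases h5 : G.Adj z d
      · exact absurd (no_pent hac h1 hab hbc hcd h5 hzb hzc nac nad nbd) not_false
      exact Or.inr (Or.inl ⟨h1, h2, h3, h5⟩)
    · by_cases h2 : G.Adj z b
      · by_cases h3 : G.Adj z c
        · exact absurd (no_tri hac h2 hbc h3) not_false
        by_cases h5 : G.Adj z d
        · exact absurd (no_quad hac h2 hbc hcd h5 hzc nbd) not_false
        -- z pendant at b : pattern on edge (c,d) with independents {a, z}
        exact Or.inl (hasDiamond_compl_of_pattern hcd
          (fun h => h1 h.symm)
          hac2 had2 h3 h5 hza.symm nac nad hzc hzd)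
      · by_cases h3 : G.Adj z c
        · by_cases h5 : G.Adj z d
          · exact absurd (no_tri hac h3 hcd h5) not_false
          -- z pendant at c : pattern on edge (a,b) with independents {d, z}
          exact Or.inl (hasDiamond_compl_of_pattern hab
            (fun h => h5 h.symm)
            had2s hbd2s h1 h2 hzd.symm nad.symm nbd.symm hza hzb)
        · by_cases h5 : G.Adj z d
          · exact Or.inr (Or.inr ⟨h5, h1, h2, h3⟩)
          -- z isolated from the path : pattern on edge (a,b) with independents {d, z}
          exact Or.inl (hasDiamond_compl_of_pattern hab
            (fun h => h5 h.symm)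
            had2s hbd2s h1 h2 hzd.symm nad.symm nbd.symm hza hzb)
  rcases hclass v hva hvb hvc hvd with hD | ⟨hv1, hv2, hv3, hv4⟩ | ⟨hv1, hv2, hv3, hv4⟩
  · exact Or.inl hD
  · -- v pendant at a
    by_cases h5 : ∀ u : V, u = a ∨ u = b ∨ u = c ∨ u = d ∨ u = v
    · refine Or.inr (Or.inr (path5_iso G hv1 hab hbc hcd hv2 hv3 hv4 hac2 had2 hbd2
        hvb hvc hvd nac nad nbd ?_))
      intro u
      rcases h5 u with rfl | rfl | rfl | rfl | rfl
      · exact Or.inr (Or.inl rfl)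
      · exact Or.inr (Or.inr (Or.inl rfl))
      · exact Or.inr (Or.inr (Or.inr (Or.inl rfl)))
      · exact Or.inr (Or.inr (Or.inr (Or.inr rfl)))
      · exact Or.inl rfl
    · push_neg at h5
      obtain ⟨w, hwa, hwb, hwc, hwd, hwv⟩ := h5
      rcases hclass w hwa hwb hwc hwd with hD | ⟨hw1, hw2, hw3, hw4⟩ | ⟨hw1, hw2, hw3, hw4⟩
      · exact Or.inl hD
      · by_cases hvw : G.Adj v w
        · exact absurd (no_tri hac hvw hw1 hv1) not_false
        · exact Or.inl (hasDiamond_compl_of_pattern hbc hvw hv2 hv3 hw2 hw3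
            hwv.symm hvb hvc hwb hwc)
      · by_cases hvw : G.Adj v w
        · exact absurd (no_hex hac hv1 hab hbc hcd hw1.symm hvw
            hvb hvc hvd nac nad (fun h => hwa (h.symm)) nbd (fun h => hwb h.symm)
            (fun h => hwc h.symm)) not_false
        · exact Or.inl (hasDiamond_compl_of_pattern hbc hvw hv2 hv3 hw3 hw4
            hwv.symm hvb hvc hwb hwc)
  · -- v pendant at d (symmetric)
    by_cases h5 : ∀ u : V, u = a ∨ u = b ∨ u = c ∨ u = d ∨ u = v
    · refine Or.inr (Or.inr (path5_iso G hab hbc hcd hv1.symm hac2 had2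
        (fun h => hv2 h.symm) hbd2 (fun h => hv3 h.symm) (fun h => hv4 h.symm)
        nac nad hva.symm nbd hvb.symm hvc.symm ?_))
      intro u
      rcases h5 u with rfl | rfl | rfl | rfl | rfl
      · exact Or.inl rfl
      · exact Or.inr (Or.inl rfl)
      · exact Or.inr (Or.inr (Or.inl rfl))
      · exact Or.inr (Or.inr (Or.inr (Or.inl rfl)))
      · exact Or.inr (Or.inr (Or.inr (Or.inr rfl)))
    · push_neg at h5
      obtain ⟨w, hwa, hwb, hwc, hwd, hwv⟩ := h5
      rcases hclass w hwa hwb hwc hwd with hD | ⟨hw1, hw2, hw3, hw4⟩ | ⟨hw1, hw2, hw3, hw4⟩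
      · exact Or.inl hD
      · by_cases hvw : G.Adj v w
        · exact absurd (no_hex hac hw1 hab hbc hcd hv1.symm hvw.symm
            hwb hwc hwd nac nad (fun h => hva h.symm) nbd (fun h => hvb h.symm)
            (fun h => hvc h.symm)) not_false
        · exact Or.inl (hasDiamond_compl_of_pattern hbc hvw hv3 hv4 hw2 hw3
            hwv.symm hvb hvc hwb hwc)
      · by_cases hvw : G.Adj v w
        · exact absurd (no_tri hac hvw hw1 hv1) not_false
        · exact Or.inl (hasDiamond_compl_of_pattern hbc hvw hv3 hv4 hw3 hw4
            hwv.symm hvb hvc hwb hwc)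

end Analysis

section Disj

open SimpleGraph

variable {V₁ V₂ : Type*} {G₁ : SimpleGraph V₁} {G₂ : SimpleGraph V₂}

@[simp] lemma disjUnion_adj_inl {u w : V₁} :
    (DisjUnion G₁ G₂).Adj (Sum.inl u) (Sum.inl w) ↔ G₁.Adj u w := by
  simp only [DisjUnion, fromRel_adj]
  constructor
  · rintro ⟨h, h2 | h2⟩
    · exact h2
    · exact h2.symm
  · intro h
    exact ⟨by simp [h.ne], Or.inl h⟩

@[simp] lemma disjUnion_adj_inr {u w : V₂} :
    (DisjUnion G₁ G₂).Adj (Sum.inr u) (Sum.inr w) ↔ G₂.Adj u w := by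
  simp only [DisjUnion, fromRel_adj]
  constructor
  · rintro ⟨h, h2 | h2⟩
    · exact h2
    · exact h2.symm
  · intro h
    exact ⟨by simp [h.ne], Or.inl h⟩

@[simp] lemma disjUnion_adj_inl_inr {u : V₁} {w : V₂} :
    ¬(DisjUnion G₁ G₂).Adj (Sum.inl u) (Sum.inr w) := by
  simp [DisjUnion, fromRel_adj]

@[simp] lemma disjUnion_adj_inr_inl {u : V₂} {w : V₁} :
    ¬(DisjUnion G₁ G₂).Adj (Sum.inr u) (Sum.inl w) := by
  simp [DisjUnion, fromRel_adj]

lemma disjUnion_walk_inl : ∀ {s x : V₁ ⊕ V₂} (_ : (DisjUnion G₁ G₂).Walk s x) (u : V₁),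
    s = Sum.inl u → ∃ u', x = Sum.inl u' ∧ G₁.Reachable u u' := by
  intro s x w
  induction w with
  | nil => exact fun u h => ⟨u, h, Reachable.refl u⟩
  | @cons s m x hadj p ih =>
    intro u h
    subst h
    cases m with
    | inl m1 =>
      obtain ⟨u', hx, hr⟩ := ih m1 rfl
      exact ⟨u', hx, (disjUnion_adj_inl.mp hadj).reachable.trans hr⟩
    | inr m2 => exact absurd hadj disjUnion_adj_inl_inr

lemma disjUnion_walk_inr : ∀ {s x : V₁ ⊕ V₂} (_ : (DisjUnion G₁ G₂).Walk s x) (u : V₂),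
    s = Sum.inr u → ∃ u', x = Sum.inr u' ∧ G₂.Reachable u u' := by
  intro s x w
  induction w with
  | nil => exact fun u h => ⟨u, h, Reachable.refl u⟩
  | @cons s m x hadj p ih =>
    intro u h
    subst h
    cases m with
    | inr m2 =>
      obtain ⟨u', hx, hr⟩ := ih m2 rfl
      exact ⟨u', hx, (disjUnion_adj_inr.mp hadj).reachable.trans hr⟩
    | inl m1 => exact absurd hadj disjUnion_adj_inr_inl

/-- The inclusion homomorphism. -/
def inlHom (G₁ : SimpleGraph V₁) (G₂ : SimpleGraph V₂) : G₁ →g DisjUnion G₁ G₂ :=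
  ⟨Sum.inl, fun h => disjUnion_adj_inl.mpr h⟩

def inrHom (G₁ : SimpleGraph V₁) (G₂ : SimpleGraph V₂) : G₂ →g DisjUnion G₁ G₂ :=
  ⟨Sum.inr, fun h => disjUnion_adj_inr.mpr h⟩

lemma disjUnion_supp_inl (v : V₁) :
    ((DisjUnion G₁ G₂).connectedComponentMk (Sum.inl v)).supp
      = Sum.inl '' (G₁.connectedComponentMk v).supp := by
  ext x
  simp only [ConnectedComponent.mem_supp_iff, ConnectedComponent.eq, Set.mem_image]
  constructor
  · intro h
    obtain ⟨u', hx, hr⟩ := disjUnion_walk_inl h.symm.some v rfl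
    exact ⟨u', hr.symm, hx.symm⟩
  · rintro ⟨u', hu', rfl⟩
    have hr : G₁.Reachable u' v := hu'
    exact (hr.map (inlHom G₁ G₂))

lemma disjUnion_supp_inr (v : V₂) :
    ((DisjUnion G₁ G₂).connectedComponentMk (Sum.inr v)).supp
      = Sum.inr '' (G₂.connectedComponentMk v).supp := by
  ext x
  simp only [ConnectedComponent.mem_supp_iff, ConnectedComponent.eq, Set.mem_image]
  constructor
  · intro h
    obtain ⟨u', hx, hr⟩ := disjUnion_walk_inr h.symm.some v rfl
    exact ⟨u', hr.symm, hx.symm⟩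
  · rintro ⟨u', hu', rfl⟩
    have hr : G₂.Reachable u' v := hu'
    exact (hr.map (inrHom G₁ G₂))

/-- induced subgraph on an `inl`-image. -/
noncomputable def induceInlIso (G₁ : SimpleGraph V₁) (G₂ : SimpleGraph V₂) (s : Set V₁) :
    G₁.induce s ≃g (DisjUnion G₁ G₂).induce (Sum.inl '' s) where
  toEquiv := Equiv.Set.image Sum.inl s Sum.inl_injective
  map_rel_iff' := by
    intro x y
    simp [Equiv.Set.image, Equiv.Set.imageOfInjOn, comap_adj]

noncomputable def induceInrIso (G₁ : SimpleGraph V₁) (G₂ : SimpleGraph V₂) (s : Set V₂) :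
    G₂.induce s ≃g (DisjUnion G₁ G₂).induce (Sum.inr '' s) where
  toEquiv := Equiv.Set.image Sum.inr s Sum.inr_injective
  map_rel_iff' := by
    intro x y
    simp [Equiv.Set.image, Equiv.Set.imageOfInjOn, comap_adj]

def disjUnionEmptyIso (G₁ : SimpleGraph V₁) (G₂ : SimpleGraph V₂) [IsEmpty V₂] :
    DisjUnion G₁ G₂ ≃g G₁ where
  toEquiv := Equiv.sumEmpty V₁ V₂
  map_rel_iff' := by
    rintro (u | u) (v | v)
    · simp [Equiv.sumEmpty]
    · exact isEmptyElim v
    · exact isEmptyElim u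
    · exact isEmptyElim u

def emptyDisjUnionIso (G₁ : SimpleGraph V₁) (G₂ : SimpleGraph V₂) [IsEmpty V₁] :
    DisjUnion G₁ G₂ ≃g G₂ where
  toEquiv := Equiv.emptySum V₁ V₂
  map_rel_iff' := by
    rintro (u | u) (v | v)
    · exact isEmptyElim u
    · exact isEmptyElim u
    · exact isEmptyElim v
    · simp [Equiv.emptySum]

lemma disjUnion_compl_adj_inl_inr (u : V₁) (w : V₂) :
    (DisjUnion G₁ G₂)ᶜ.Adj (Sum.inl u) (Sum.inr w) := by
  rw [compl_adj]
  exact ⟨by simp, disjUnion_adj_inl_inr⟩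

lemma disjUnion_compl_preconnected [Nonempty V₁] [Nonempty V₂] :
    (DisjUnion G₁ G₂)ᶜ.Preconnected := by
  obtain ⟨u₀⟩ := (inferInstance : Nonempty V₁)
  obtain ⟨w₀⟩ := (inferInstance : Nonempty V₂)
  have reach : ∀ x, (DisjUnion G₁ G₂)ᶜ.Reachable x (Sum.inr w₀) := by
    intro x
    cases x with
    | inl u => exact (disjUnion_compl_adj_inl_inr u w₀).reachable
    | inr w =>
      by_cases hw : w = w₀
      · subst hw; exact Reachable.refl _
      · exact ((disjUnion_compl_adj_inl_inr u₀ w).symm.reachable).trans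
          (disjUnion_compl_adj_inl_inr u₀ w₀).reachable
  intro x y
  exact (reach x).trans (reach y).symm

end Disj

section Classify

open SimpleGraph

lemma exists_p4 {W : Type*} {H : SimpleGraph W} (h : ¬ _root_.Free H (pathGraph 4)) :
    ∃ q : Fin 4 → W, H.Adj (q 0) (q 1) ∧ H.Adj (q 1) (q 2) ∧ H.Adj (q 2) (q 3) ∧
      ¬H.Adj (q 0) (q 2) ∧ ¬H.Adj (q 0) (q 3) ∧ ¬H.Adj (q 1) (q 3) ∧
      q 0 ≠ q 2 ∧ q 0 ≠ q 3 ∧ q 1 ≠ q 3 := by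
  rw [_root_.Free, not_isEmpty_iff] at h
  obtain ⟨e⟩ := h
  have hP : ∀ i j : Fin 4, ((i : ℕ) + 1 = (j : ℕ) ∨ (j : ℕ) + 1 = (i : ℕ)) → H.Adj (e i) (e j) :=
    fun i j hj => e.map_adj_iff.mpr (pathGraph_adj.mpr hj)
  have hN : ∀ i j : Fin 4, ¬((i : ℕ) + 1 = (j : ℕ) ∨ (j : ℕ) + 1 = (i : ℕ)) →
      ¬H.Adj (e i) (e j) :=
    fun i j hj hc => hj (pathGraph_adj.mp (e.map_adj_iff.mp hc))
  exact ⟨fun i => e i,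
    hP 0 1 (by decide), hP 1 2 (by decide), hP 2 3 (by decide),
    hN 0 2 (by decide), hN 0 3 (by decide), hN 1 3 (by decide),
    e.injective.ne (by decide), e.injective.ne (by decide), e.injective.ne (by decide)⟩

lemma exists_p4_induce {W : Type*} {H : SimpleGraph W} {s : Set W}
    (h : ¬ _root_.Free (H.induce s) (pathGraph 4)) :
    ∃ q : Fin 4 → W, H.Adj (q 0) (q 1) ∧ H.Adj (q 1) (q 2) ∧ H.Adj (q 2) (q 3) ∧
      ¬H.Adj (q 0) (q 2) ∧ ¬H.Adj (q 0) (q 3) ∧ ¬H.Adj (q 1) (q 3) ∧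
      q 0 ≠ q 2 ∧ q 0 ≠ q 3 ∧ q 1 ≠ q 3 := by
  obtain ⟨q, A01, A12, A23, N02, N03, N13, n02, n03, n13⟩ := exists_p4 h
  refine ⟨fun i => (q i).val, ?_, ?_, ?_, ?_, ?_, ?_,
    fun hh => n02 (Subtype.ext hh), fun hh => n03 (Subtype.ext hh),
    fun hh => n13 (Subtype.ext hh)⟩ <;>
    simpa [comap_adj] using ‹_›

/-- from a `Gᶜ`-induced `P₄` to a `G`-induced `P₄`, for an acyclic `G`:
the complement of `P₄` is again a `P₄` (in order `q1 q3 q0 q2`). -/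
lemma compl_p4_flip {V : Type*} {G : SimpleGraph V} {q : Fin 4 → V}
    (A01 : Gᶜ.Adj (q 0) (q 1)) (A12 : Gᶜ.Adj (q 1) (q 2)) (A23 : Gᶜ.Adj (q 2) (q 3))
    (N02 : ¬Gᶜ.Adj (q 0) (q 2)) (N03 : ¬Gᶜ.Adj (q 0) (q 3)) (N13 : ¬Gᶜ.Adj (q 1) (q 3))
    (n02 : q 0 ≠ q 2) (n03 : q 0 ≠ q 3) (n13 : q 1 ≠ q 3) :
    G.Adj (q 1) (q 3) ∧ G.Adj (q 3) (q 0) ∧ G.Adj (q 0) (q 2) ∧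
      ¬G.Adj (q 1) (q 0) ∧ ¬G.Adj (q 1) (q 2) ∧ ¬G.Adj (q 3) (q 2) ∧
      q 1 ≠ q 0 ∧ q 1 ≠ q 2 ∧ q 3 ≠ q 2 := by
  have e13 : G.Adj (q 1) (q 3) := by
    by_contra hx
    exact N13 ((compl_adj G _ _).mpr ⟨n13, hx⟩)
  have e30 : G.Adj (q 3) (q 0) := by
    by_contra hx
    exact N03 ((compl_adj G _ _).mpr ⟨n03, fun hh => hx hh.symm⟩)
  have e02 : G.Adj (q 0) (q 2) := by
    by_contra hx
    exact N02 ((compl_adj G _ _).mpr ⟨n02, hx⟩)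
  refine ⟨e13, e30, e02, ?_, ?_, ?_, A01.ne.symm, A12.ne, A23.ne.symm⟩
  · exact fun hh => ((compl_adj G _ _).mp A01).2 hh.symm
  · exact ((compl_adj G _ _).mp A12).2
  · exact fun hh => ((compl_adj G _ _).mp A23).2 hh.symm

/-- Main classification: every component of a tree-cograph, and of its complement,
is good. -/
lemma classify : ∀ {V : Type} (G : SimpleGraph V), TreeCograph G →
    (∀ c : G.ConnectedComponent, GoodGraph (G.induce c.supp)) ∧
    (∀ c : Gᶜ.ConnectedComponent, GoodGraph (Gᶜ.induce c.supp)) := by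
  intro V G h
  induction h with
  | @tree V _ G hconn hacyc =>
    constructor
    · intro c
      rw [supp_eq_univ_of_preconnected hconn.preconnected c]
      exact goodGraph_of_iso (induceUnivIso G).symm (Or.inl ⟨hconn, hacyc⟩)
    · intro c
      by_cases hfree : _root_.Free (Gᶜ.induce c.supp) (pathGraph 4)
      · exact Or.inr (Or.inr (Or.inl hfree))
      obtain ⟨q, A01, A12, A23, N02, N03, N13, n02, n03, n13⟩ := exists_p4_induce hfree
      obtain ⟨e13, e30, e02, f10, f12, f32, m10, m12, m32⟩ :=
        compl_p4_flip A01 A12 A23 N02 N03 N13 n02 n03 n13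
      -- `G` has induced path (q 1) (q 3) (q 0) (q 2)
      have hpre : Gᶜ.Preconnected :=
        compl_preconnected_of_path hacyc e13 e30 e02 f10 f12 f32 m10 m12 m32
      rw [supp_eq_univ_of_preconnected hpre c]
      apply goodGraph_of_iso (induceUnivIso Gᶜ).symm
      rcases tree_analysis G hacyc e13 e30 e02 f10 f12 f32 m10 m12 m32 with hD | ψ | ψ
      · exact Or.inr (Or.inr (Or.inr hD))
      · refine ψ.elim fun i => Or.inl ⟨?_, isAcyclic_of_iso i.symm hacyc⟩
        have : Nonempty V := ⟨q 0⟩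
        exact ⟨hpre⟩
      · exact ψ.elim fun i => Or.inr (Or.inl ⟨isoCompl i⟩)
  | @union V₁ V₂ G₁ G₂ h1 h2 ih1 ih2 =>
    constructor
    · intro c
      refine c.ind fun x => ?_
      cases x with
      | inl v =>
        rw [disjUnion_supp_inl v]
        exact goodGraph_of_iso (induceInlIso G₁ G₂ _) (ih1.1 _)
      | inr v =>
        rw [disjUnion_supp_inr v]
        exact goodGraph_of_iso (induceInrIso G₁ G₂ _) (ih2.1 _)
    · rcases isEmpty_or_nonempty V₂ with hE | hNE2
      · exact forall_good_components_of_iso (isoCompl (disjUnionEmptyIso G₁ G₂)).symm ih1.2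
      rcases isEmpty_or_nonempty V₁ with hE | hNE1
      · exact forall_good_components_of_iso (isoCompl (emptyDisjUnionIso G₁ G₂)).symm ih2.2
      intro c
      have hpre : (DisjUnion G₁ G₂)ᶜ.Preconnected := disjUnion_compl_preconnected
      rw [supp_eq_univ_of_preconnected hpre c]
      apply goodGraph_of_iso (induceUnivIso _).symm
      by_cases hfree : _root_.Free ((DisjUnion G₁ G₂)ᶜ) (pathGraph 4)
      · exact Or.inr (Or.inr (Or.inl hfree))
      obtain ⟨q, A01, A12, A23, N02, N03, N13, n02, n03, n13⟩ := exists_p4 hfree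
      refine Or.inr (Or.inr (Or.inr ?_))
      -- from non-adjacency in the complement to adjacency in the disjoint union
      have du02 : (DisjUnion G₁ G₂).Adj (q 0) (q 2) := by
        by_contra hx; exact N02 ((compl_adj _ _ _).mpr ⟨n02, hx⟩)
      have du03 : (DisjUnion G₁ G₂).Adj (q 0) (q 3) := by
        by_contra hx; exact N03 ((compl_adj _ _ _).mpr ⟨n03, hx⟩)
      have du13 : (DisjUnion G₁ G₂).Adj (q 1) (q 3) := by
        by_contra hx; exact N13 ((compl_adj _ _ _).mpr ⟨n13, hx⟩)
      have sides : ∀ {x y : V₁ ⊕ V₂}, (DisjUnion G₁ G₂).Adj x y → x.isLeft = y.isLeft := by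
        rintro (x | x) (y | y) hxy
        · rfl
        · exact absurd hxy disjUnion_adj_inl_inr
        · exact absurd hxy disjUnion_adj_inr_inl
        · rfl
      have s02 := sides du02
      have s03 := sides du03
      have s13 := sides du13
      obtain ⟨u₀⟩ := hNE1
      obtain ⟨w₀⟩ := hNE2
      -- all four vertices are on one side; pick an opposite-side vertex
      cases hq0 : q 0 with
      | inl z0 =>
        have hl : ∀ i : Fin 4, (q i).isLeft = true := by
          intro i
          fin_cases i
          · show (q 0).isLeft = true; rw [hq0]; rfl
          · show (q 1).isLeft = true; rw [s13, ← s03, hq0]; rfl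
          · show (q 2).isLeft = true; rw [← s02, hq0]; rfl
          · show (q 3).isLeft = true; rw [← s03, hq0]; rfl
        have cross : ∀ i : Fin 4, (DisjUnion G₁ G₂)ᶜ.Adj (q i) (Sum.inr w₀) := by
          intro i
          have hli := hl i
          cases hqi : q i with
          | inl z => exact disjUnion_compl_adj_inl_inr z w₀
          | inr z => rw [hqi] at hli; simp at hli
        exact ⟨q 1, Sum.inr w₀, q 0, q 2, cross 1, A01, cross 0, A12.symm, cross 2, n02, N02⟩
      | inr z0 =>
        have hl : ∀ i : Fin 4, (q i).isLeft = false := by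
          intro i
          fin_cases i
          · show (q 0).isLeft = false; rw [hq0]; rfl
          · show (q 1).isLeft = false; rw [s13, ← s03, hq0]; rfl
          · show (q 2).isLeft = false; rw [← s02, hq0]; rfl
          · show (q 3).isLeft = false; rw [← s03, hq0]; rfl
        have cross : ∀ i : Fin 4, (DisjUnion G₁ G₂)ᶜ.Adj (q i) (Sum.inl u₀) := by
          intro i
          have hli := hl i
          cases hqi : q i with
          | inl z => rw [hqi] at hli; simp at hli
          | inr z => exact (disjUnion_compl_adj_inl_inr u₀ z).symm
        exact ⟨q 1, Sum.inl u₀, q 0, q 2, cross 1, A01, cross 0, A12.symm, cross 2, n02, N02⟩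
  | @compl V G h ih =>
    refine ⟨ih.2, ?_⟩
    have e : Gᶜᶜ = G := compl_compl G
    rw [e]
    exact ih.1
  | @iso V W G H h hiso ih =>
    obtain ⟨φ⟩ := hiso
    exact ⟨forall_good_components_of_iso φ ih.1,
      forall_good_components_of_iso (isoCompl φ) ih.2⟩

end Classify

/-- Every connected component of a contact B₀-VPG tree-cograph is a
tree, or is isomorphic to the complement of `P₅`, or is a contact B₀-VPG cograph. -/
theorem stmt_13 {V : Type} [Fintype V] (G : SimpleGraph V) (h : TreeCograph G)
    (hc : ContactB0VPG G) :
    ∀ c : G.ConnectedComponent,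
      ((G.induce c.supp).Connected ∧ (G.induce c.supp).IsAcyclic) ∨
      Nonempty ((G.induce c.supp) ≃g (pathGraph 5)ᶜ) ∨
      (_root_.Free (G.induce c.supp) (pathGraph 4) ∧ ContactB0VPG (G.induce c.supp)) := by
  intro c
  rcases (classify G h).1 c with h1 | h2 | h3 | h4
  · exact Or.inl h1
  · exact Or.inr (Or.inl h2)
  · exact Or.inr (Or.inr ⟨h3, contactB0VPG_induce hc _⟩)
  · exact absurd (hasDiamond_of_induce h4) (not_hasDiamond_of_contact hc)
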